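/- Let q be odd and σ : F_q → F_q a semipermutation (|σ(F_q)| = q-1, with the two collisions σ(z_1) = σ(z_2) = a, z_1 ≠ z_2, and b the unique value not attained). Suppose x = (j, σ(j)) with j ∉ {z_1, z_2} is lonely (lies in exactly one collinear triple of Γ_σ), with m_j the slope of that triple and m_j^⊥ the unique slope in F_q* whose line through x meets Γ_σ only at x. Then m_j^⊥ = -m_j · (σ(j) - b)/(σ(j) - a). -/

import Mathlib

/-- Number of points of the graph of `σ` on the line through `x` of slope `m`. -/
def lineCount {F : Type*} [Field F] [Fintype F] [DecidableEq F]
    (σ : F → F) (x : F × F) (m : F) : ℕ :=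
  (Finset.univ.filter (fun i : F => σ i - x.2 = m * (i - x.1))).card

/-- The collinear triples of the graph of `σ` containing the point `(j, σ j)`,
encoded by the two-element sets of other abscissae. -/
def triplesThrough {F : Type*} [Field F] [Fintype F] [DecidableEq F]
    (σ : F → F) (j : F) : Finset (Finset F) :=
  Finset.univ.filter (fun s : Finset F => s.card = 2 ∧ j ∉ s ∧
    ∀ i ∈ s, ∀ k ∈ s, (σ i - σ j) * (k - j) = (σ k - σ j) * (i - j))

open Finset

theorem wilson_field {F : Type*} [Field F] [Fintype F] [DecidableEq F] :
    ∏ t ∈ univ.erase (0 : F), t = -1 := by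
  have h := FiniteField.prod_univ_units_id_eq_neg_one (K := F)
  have h2 : ((∏ x : Fˣ, x : Fˣ) : F) = ∏ x : Fˣ, (x : F) :=
    map_prod (Units.coeHom F) _ _
  have h3 : ∏ x : Fˣ, (x : F) = ∏ t ∈ univ.erase (0:F), t :=
    Finset.prod_bij' (fun u _ => (u : F))
      (fun t ht => Units.mk0 t (Finset.ne_of_mem_erase ht))
      (fun u _ => by simp [Units.ne_zero])
      (fun t ht => mem_univ _)
      (fun u _ => by simp)
      (fun t ht => by simp)
      (fun u _ => rfl)
  rw [← h3, ← h2, h]; simp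

theorem shift_prod {F : Type*} [Field F] [Fintype F] [DecidableEq F] (d : F) :
    ∏ y ∈ univ.erase d, (y - d) = ∏ t ∈ univ.erase (0 : F), t :=
  Finset.prod_bij' (fun y _ => y - d) (fun t _ => t + d)
    (fun y hy => by
      simp only [mem_erase, mem_univ, and_true] at hy ⊢
      exact sub_ne_zero.mpr hy)
    (fun t ht => by
      simp only [mem_erase, mem_univ, and_true] at ht ⊢
      intro h
      exact ht (by simpa using h))
    (fun y _ => by ring)
    (fun t _ => by ring)
    (fun y _ => rfl)


/-- Let `σ` be a semipermutation of a finite field of odd order: its only collision is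
`σ z₁ = σ z₂ = a` with `z₁ ≠ z₂`, and `b` is the unique value not attained.  If
`x = (j, σ j)` with `j ∉ {z₁, z₂}` is lonely, `m_j` is the slope of its unique
collinear triple and `m_j^⊥` the unique nonzero slope whose line through `x` meets
the graph only at `x`, then `m_j^⊥ = -m_j (σ j - b)/(σ j - a)`. -/
theorem semiperm_lonely_perp_slope {F : Type*} [Field F] [Fintype F] [DecidableEq F]
    (hq : Odd (Fintype.card F)) (σ : F → F) (z1 z2 a b : F) (hz : z1 ≠ z2)
    (ha1 : σ z1 = a) (ha2 : σ z2 = a)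
    (hinj : ∀ i k : F, σ i = σ k → i = k ∨ ({i, k} : Set F) = {z1, z2})
    (hb : b ∉ Set.range σ)
    (j : F) (hj1 : j ≠ z1) (hj2 : j ≠ z2)
    (hlone : (triplesThrough σ j).card = 1)
    (mj mp : F) (hmj : mj ≠ 0) (h3 : lineCount σ (j, σ j) mj = 3)
    (hmp : mp ≠ 0) (h1 : lineCount σ (j, σ j) mp = 1) :
    mp = -mj * (σ j - b) / (σ j - a) := by
  classical
  -- basic nonequalities
  have hne : ∀ i : F, i ≠ j → σ i ≠ σ j := by
    intro i hij hcon
    rcases hinj i j hcon with h | h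
    · exact hij h
    · have hjm : j ∈ ({z1, z2} : Set F) := h ▸ (by simp)
      rcases hjm with h' | h'
      · exact hj1 h'
      · exact hj2 h'
  have hsub : ∀ i : F, i ≠ j → i - j ≠ 0 := fun i h => sub_ne_zero.mpr h
  have haσ : a ≠ σ j := ha1 ▸ hne z1 (Ne.symm hj1)
  have hbσ : b ≠ σ j := fun h => hb ⟨j, h.symm⟩
  -- the slope function
  set m : F → F := fun i => (σ i - σ j) / (i - j) with hm
  have hmeq : ∀ i : F, i ≠ j → ∀ s : F, m i = s ↔ σ i - σ j = s * (i - j) := by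
    intro i hij s
    rw [hm]
    exact div_eq_iff (hsub i hij)
  -- unfold line counts
  have h3' : (univ.filter (fun i : F => σ i - σ j = mj * (i - j))).card = 3 := by
    simpa [lineCount] using h3
  have h1' : (univ.filter (fun i : F => σ i - σ j = mp * (i - j))).card = 1 := by
    simpa [lineCount] using h1
  set A := univ.filter (fun i : F => σ i - σ j = mj * (i - j)) with hA
  have hjA : j ∈ A := by simp [hA]
  have hBcard : (A.erase j).card = 2 := by
    rw [card_erase_of_mem hjA, h3']
  obtain ⟨k1, k2, hk12, hB⟩ := Finset.card_eq_two.mp hBcard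
  have hk1 : k1 ∈ A.erase j := by rw [hB]; simp
  have hk2 : k2 ∈ A.erase j := by rw [hB]; simp
  have hk1j : k1 ≠ j := (mem_erase.mp hk1).1
  have hk2j : k2 ≠ j := (mem_erase.mp hk2).1
  have hk1e : σ k1 - σ j = mj * (k1 - j) := by
    have := (mem_erase.mp hk1).2; rw [hA, mem_filter] at this; exact this.2
  have hk2e : σ k2 - σ j = mj * (k2 - j) := by
    have := (mem_erase.mp hk2).2; rw [hA, mem_filter] at this; exact this.2
  -- mp line only meets at j
  have hmponly : ∀ i : F, i ≠ j → σ i - σ j ≠ mp * (i - j) := by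
    intro i hij hcon
    have hi : i ∈ univ.filter (fun i : F => σ i - σ j = mp * (i - j)) := by
      simp [hcon]
    have hj' : j ∈ univ.filter (fun i : F => σ i - σ j = mp * (i - j)) := by simp
    exact hij (Finset.card_le_one.mp (le_of_eq h1') i hi j hj')
  -- triples
  have htrip : ∀ s : F, ∀ i1 i2 : F, i1 ≠ i2 → i1 ≠ j → i2 ≠ j →
      σ i1 - σ j = s * (i1 - j) → σ i2 - σ j = s * (i2 - j) →
      ({i1, i2} : Finset F) ∈ triplesThrough σ j := by
    intro s i1 i2 h12 h1j h2j e1 e2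
    rw [triplesThrough, mem_filter]
    refine ⟨mem_univ _, Finset.card_pair h12, by simp [Ne.symm h1j, Ne.symm h2j, h1j, h2j], ?_⟩
    · intro i hi k hk
      have ei : σ i - σ j = s * (i - j) := by
        rcases Finset.mem_insert.mp hi with h | h
        · rw [h]; exact e1
        · rw [Finset.mem_singleton.mp h]; exact e2
      have ek : σ k - σ j = s * (k - j) := by
        rcases Finset.mem_insert.mp hk with h | h
        · rw [h]; exact e1
        · rw [Finset.mem_singleton.mp h]; exact e2
      rw [ei, ek]; ring
  have huniq : ∀ s1 ∈ triplesThrough σ j, ∀ s2 ∈ triplesThrough σ j, s1 = s2 :=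
    Finset.card_le_one.mp (le_of_eq hlone)
  have hKtrip : ({k1, k2} : Finset F) ∈ triplesThrough σ j :=
    htrip mj k1 k2 hk12 hk1j hk2j hk1e hk2e
  -- mj ≠ mp
  have hmjmp : mj ≠ mp := by
    intro h
    rw [hA, h] at h3'
    rw [h3'] at h1'
    norm_num at h1'
  -- the sets
  set T' : Finset F := ((univ.erase j).erase k1).erase k2 with hT'
  set S' : Finset F := ((univ.erase (0:F)).erase mj).erase mp with hS'
  have hk1mem : k1 ∈ univ.erase j := by simp [hk1j]
  have hk2mem : k2 ∈ (univ.erase j).erase k1 := by simp [hk2j, hk12.symm]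
  have hmjmem : mj ∈ univ.erase (0:F) := by simp [hmj]
  have hmpmem : mp ∈ (univ.erase (0:F)).erase mj := by simp [hmp, hmjmp.symm]
  -- membership of slopes
  have hmemS : ∀ i ∈ T', m i ∈ S' := by
    intro i hi
    rw [hT'] at hi
    simp only [mem_erase, mem_univ, and_true] at hi
    obtain ⟨hik2, hik1, hij⟩ := hi
    rw [hS']
    simp only [mem_erase, mem_univ, and_true]
    refine ⟨?_, ?_, ?_⟩
    · intro h
      exact hmponly i hij ((hmeq i hij mp).mp h)
    · intro h
      have : σ i - σ j = mj * (i - j) := (hmeq i hij mj).mp h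
      have hiA : i ∈ A.erase j := by
        rw [mem_erase, hA, mem_filter]; exact ⟨hij, mem_univ _, this⟩
      rw [hB] at hiA
      rcases Finset.mem_insert.mp hiA with h' | h'
      · exact hik1 h'
      · exact hik2 (Finset.mem_singleton.mp h')
    · rw [hm]
      exact div_ne_zero (sub_ne_zero.mpr (hne i hij)) (hsub i hij)
  -- injectivity
  have hinjOn : ∀ i1 ∈ T', ∀ i2 ∈ T', m i1 = m i2 → i1 = i2 := by
    intro i1 hi1 i2 hi2 hmm
    by_contra h12
    rw [hT'] at hi1 hi2
    simp only [mem_erase, mem_univ, and_true] at hi1 hi2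
    obtain ⟨h1k2, h1k1, h1j⟩ := hi1
    obtain ⟨h2k2, h2k1, h2j⟩ := hi2
    have e1 : σ i1 - σ j = m i1 * (i1 - j) := (hmeq i1 h1j (m i1)).mp rfl
    have e2 : σ i2 - σ j = m i1 * (i2 - j) := (hmeq i2 h2j (m i1)).mp hmm.symm
    have hItrip := htrip (m i1) i1 i2 h12 h1j h2j e1 e2
    have heq := huniq _ hItrip _ hKtrip
    have : i1 ∈ ({k1, k2} : Finset F) := by rw [← heq]; simp
    rcases Finset.mem_insert.mp this with h' | h'
    · exact h1k1 h'
    · exact h1k2 (Finset.mem_singleton.mp h')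
  -- cardinalities
  have hcardT : T'.card = Fintype.card F - 1 - 1 - 1 := by
    rw [hT', card_erase_of_mem hk2mem, card_erase_of_mem hk1mem,
      card_erase_of_mem (mem_univ j), card_univ]
  have hcardS : S'.card = Fintype.card F - 1 - 1 - 1 := by
    rw [hS', card_erase_of_mem hmpmem, card_erase_of_mem hmjmem,
      card_erase_of_mem (mem_univ (0:F)), card_univ]
  have himage : T'.image m = S' := by
    apply Finset.eq_of_subset_of_card_le
    · intro y hy
      obtain ⟨i, hi, rfl⟩ := Finset.mem_image.mp hy
      exact hmemS i hi
    · rw [Finset.card_image_of_injOn hinjOn, hcardT, hcardS]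
  -- products
  set P := ∏ y ∈ S', y with hP
  have P1 : ∏ i ∈ T', m i = P := by
    rw [hP, ← himage, Finset.prod_image hinjOn]
  have P2 : ∏ i ∈ univ.erase j, m i = mj * (mj * P) := by
    rw [← Finset.mul_prod_erase _ _ hk1mem, ← Finset.mul_prod_erase _ _ hk2mem]
    have e1 : m k1 = mj := (hmeq k1 hk1j mj).mpr hk1e
    have e2 : m k2 = mj := (hmeq k2 hk2j mj).mpr hk2e
    rw [e1, e2, ← hT', P1]
  have P3 : (-1 : F) = mj * (mp * P) := by
    rw [← wilson_field (F := F), ← Finset.mul_prod_erase _ _ hmjmem,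
      ← Finset.mul_prod_erase _ _ hmpmem, ← hS', hP]
  have P4 : ∏ i ∈ univ.erase j, m i
      = (∏ i ∈ univ.erase j, (σ i - σ j)) / (∏ i ∈ univ.erase j, (i - j)) := by
    rw [hm, Finset.prod_div_distrib]
  have P5 : ∏ i ∈ univ.erase j, (i - j) = -1 := by
    rw [shift_prod j, wilson_field]
  -- injectivity of σ off z2 and the image of σ
  have hinj2 : ∀ i ∈ univ.erase z2, ∀ k ∈ univ.erase z2, σ i = σ k → i = k := by
    intro i hi k hk h
    rcases hinj i k h with h' | h'
    · exact h'
    · have hi2 : i ∈ ({z1, z2} : Set F) := h' ▸ (by simp)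
      have hk2' : k ∈ ({z1, z2} : Set F) := h' ▸ (by simp)
      simp only [mem_erase, mem_univ, and_true] at hi hk
      rcases hi2 with h1 | h1
      · rcases hk2' with h2 | h2
        · rw [h1, h2]
        · exact absurd h2 hk
      · exact absurd h1 hi
  have himgσ : (univ.erase z2).image σ = univ.erase b := by
    apply Finset.eq_of_subset_of_card_le
    · intro y hy
      obtain ⟨i, hi, rfl⟩ := Finset.mem_image.mp hy
      simp only [mem_erase, mem_univ, and_true]
      exact fun h => hb ⟨i, h⟩
    · rw [Finset.card_image_of_injOn hinj2,
        card_erase_of_mem (mem_univ b), card_erase_of_mem (mem_univ z2)]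
  have hz2mem : z2 ∈ univ.erase j := by simp [Ne.symm hj2]
  -- image of the doubly-erased set
  have himgE : ((univ.erase j).erase z2).image σ = (univ.erase b).erase (σ j) := by
    ext y
    simp only [Finset.mem_image, mem_erase, mem_univ, and_true]
    constructor
    · rintro ⟨i, ⟨hiz2, hij⟩, rfl⟩
      exact ⟨hne i hij, fun h => hb ⟨i, h⟩⟩
    · rintro ⟨hyσ, hyb⟩
      have : y ∈ (univ.erase z2).image σ := by
        rw [himgσ]; simp [hyb]
      obtain ⟨i, hi, rfl⟩ := Finset.mem_image.mp this
      simp only [mem_erase, mem_univ, and_true] at hi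
      refine ⟨i, ⟨hi, fun h => hyσ (by rw [h])⟩, rfl⟩
  set M := ∏ y ∈ (univ.erase b).erase (σ j), (y - σ j) with hM
  have P6 : ∏ i ∈ univ.erase j, (σ i - σ j) = (a - σ j) * M := by
    rw [← Finset.mul_prod_erase _ _ hz2mem, ha2, hM, ← himgE,
      Finset.prod_image]
    intro i hi k hk h
    apply hinj2 i _ k _ h
    · have hi' : i ∈ (univ.erase j).erase z2 := hi
      simp only [mem_erase, mem_univ, and_true] at hi' ⊢; exact hi'.1
    · have hk' : k ∈ (univ.erase j).erase z2 := hk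
      simp only [mem_erase, mem_univ, and_true] at hk' ⊢; exact hk'.1
  have EM : (b - σ j) * M = -1 := by
    have hbmem : b ∈ univ.erase (σ j) := by simp [hbσ]
    have hcomm : ((univ.erase b).erase (σ j) : Finset F) = (univ.erase (σ j)).erase b :=
      Finset.erase_right_comm
    rw [hM, hcomm, Finset.mul_prod_erase _ (fun y => y - σ j) hbmem, shift_prod, wilson_field]
  -- assemble
  have E1 : mj * (mj * P) = ((a - σ j) * M) / (-1 : F) := by
    rw [← P2, P4, P5, P6]
  have e4 : mj * mj * P * (b - σ j) = a - σ j := by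
    have E1' : mj * (mj * P) = -((a - σ j) * M) := by
      rw [E1]; ring
    linear_combination (b - σ j) * E1' - (a - σ j) * EM
  have haσ' : σ j - a ≠ 0 := sub_ne_zero.mpr (Ne.symm haσ)
  field_simp
  linear_combination mp * e4 + mj * (b - σ j) * P3
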